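/- The pair (I_W, d_{I_W}) is a matrix factorisation of W(x′) − W(x): the endomorphism d_{I_W} := Σ_{i=1}^n ( ∂_{[i]}W • L_i + (x′_i − x_i) • C_i ) of the exterior algebra ⋀(k[x,x′]^n) satisfies d_{I_W} ∘ d_{I_W} = (W(x′_1,…,x′_n) − W(x_1,…,x_n)) • id. -/

import Mathlib

open MvPolynomial ExteriorAlgebra

/-- The polynomial `W_i ∈ k[x,x′]`, the image of `W` under the `k`-algebra map sending
`x_j ↦ x_j` for `j ≤ i` (1-indexed, i.e. `j.val < i` 0-indexed) and `x_j ↦ x′_j` for `j > i`. -/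
noncomputable def Wi {k : Type*} [CommRing k] {n : ℕ} (W : MvPolynomial (Fin n) k) (i : ℕ) :
    MvPolynomial (Fin n ⊕ Fin n) k :=
  aeval (fun j : Fin n =>
    if (j : ℕ) < i then X (Sum.inl j) else X (Sum.inr j)) W

open ExteriorAlgebra

theorem aux_mf {R : Type*} [CommRing R] {n : ℕ} (D s : Fin n → R)
    (C : Fin n → Module.End R (ExteriorAlgebra R (Fin n → R)))
    (hC1 : ∀ i, C i 1 = 0)
    (hC2 : ∀ (i : Fin n) (m : Fin n → R) (ω : ExteriorAlgebra R (Fin n → R)),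
      C i (ι R m * ω) = m i • ω - ι R m * C i ω) :
    (∑ i, (D i • LinearMap.mulLeft R (ι R (Pi.single i (1:R))) + s i • C i)) ∘ₗ
    (∑ i, (D i • LinearMap.mulLeft R (ι R (Pi.single i (1:R))) + s i • C i))
      = (∑ i, s i * D i) •
        (LinearMap.id : Module.End R (ExteriorAlgebra R (Fin n → R))) := by
  set d : Module.End R (ExteriorAlgebra R (Fin n → R)) :=
    ∑ i, (D i • LinearMap.mulLeft R (ι R (Pi.single i (1:R))) + s i • C i) with hd
  have hswap : ∀ (a b : Fin n → R), ι R a * ι R b = -(ι R b * ι R a) := fun a b =>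
    eq_neg_of_add_eq_zero_left (ι_add_mul_swap a b)
  have hder : ∀ (m : Fin n → R) (ω : ExteriorAlgebra R (Fin n → R)),
      d (ι R m * ω) = (∑ i, m i * s i) • ω - ι R m * d ω := by
    intro m ω
    rw [hd]
    simp only [LinearMap.sum_apply, LinearMap.add_apply, LinearMap.smul_apply,
      LinearMap.mulLeft_apply, hC2]
    rw [Finset.mul_sum, Finset.sum_smul, ← Finset.sum_sub_distrib]
    refine Finset.sum_congr rfl fun i _ => ?_
    rw [← mul_assoc, hswap, neg_mul, mul_assoc, mul_add, mul_smul_comm, mul_smul_comm,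
      smul_sub, smul_smul, smul_neg, mul_comm (s i) (m i)]
    abel
  have hd1 : d 1 = ∑ i, D i • ι R (Pi.single i (1:R)) := by
    rw [hd]
    simp only [LinearMap.sum_apply, LinearMap.add_apply, LinearMap.smul_apply,
      LinearMap.mulLeft_apply, hC1, mul_one, smul_zero, add_zero]
  have hT : ∑ i : Fin n, ∑ j : Fin n,
      (D i * D j) • ((ι R (Pi.single i (1:R)) : ExteriorAlgebra R (Fin n → R))
        * ι R (Pi.single j (1:R))) = 0 := by
    rw [← Finset.sum_product']
    refine Finset.sum_ninvolution Prod.swap (fun p => ?_) (fun p hp => ?_)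
      (fun p => Finset.mem_univ _) (fun p => p.swap_swap)
    · obtain ⟨a, b⟩ := p
      show (D a * D b) • ((ι R (Pi.single a (1:R)) : ExteriorAlgebra R (Fin n → R))
            * ι R (Pi.single b (1:R)))
          + (D b * D a) • ((ι R (Pi.single b (1:R)) : ExteriorAlgebra R (Fin n → R))
            * ι R (Pi.single a (1:R))) = 0
      rw [mul_comm (D b) (D a), ← smul_add, ι_add_mul_swap, smul_zero]
    · obtain ⟨a, b⟩ := p
      intro h
      have h1 : b = a := (Prod.ext_iff.mp h).1
      apply hp
      subst h1
      show (D b * D b) • ((ι R (Pi.single b (1:R)) : ExteriorAlgebra R (Fin n → R))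
        * ι R (Pi.single b (1:R))) = 0
      rw [ι_sq_zero, smul_zero]
  have hdd1 : d (d 1) = (∑ i, s i * D i) • (1 : ExteriorAlgebra R (Fin n → R)) := by
    rw [hd1, map_sum]
    have : ∀ i : Fin n, d (ι R (Pi.single i (1:R))) =
        s i • (1 : ExteriorAlgebra R (Fin n → R)) - ι R (Pi.single i (1:R)) * d 1 := by
      intro i
      have := hder (Pi.single i (1:R)) 1
      rw [mul_one] at this
      rw [this]
      congr 1
      congr 1
      simp [Pi.single_apply]
    simp only [map_smul, this, hd1, smul_sub, smul_smul]
    rw [Finset.sum_sub_distrib]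
    have h2 : ∑ i : Fin n, D i • (ι R (Pi.single i (1:R)) * ∑ j, D j • ι R (Pi.single j (1:R)))
        = 0 := by
      rw [← hT]
      refine Finset.sum_congr rfl fun i _ => ?_
      rw [Finset.mul_sum, Finset.smul_sum]
      refine Finset.sum_congr rfl fun j _ => ?_
      rw [mul_smul_comm, smul_smul]
    rw [h2, sub_zero, ← Finset.sum_smul]
    refine congrArg (· • (1:ExteriorAlgebra R (Fin n → R))) ?_
    exact Finset.sum_congr rfl fun i _ => mul_comm _ _
  refine LinearMap.ext fun ω => ?_
  show d (d ω) = (∑ i, s i * D i) • ω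
  induction ω using CliffordAlgebra.left_induction with
  | algebraMap r =>
    rw [Algebra.algebraMap_eq_smul_one, map_smul, map_smul, hdd1, smul_comm]
  | add x y hx hy => rw [map_add, map_add, hx, hy, smul_add]
  | ι_mul x m hx =>
    rw [show CliffordAlgebra.ι (0 : QuadraticForm R (Fin n → R)) m = ι R m from rfl]
    rw [hder, map_sub, map_smul, hder, hx, sub_sub_cancel, mul_smul_comm]

set_option maxHeartbeats 1600000 in
/-- The unit matrix factorisation `(I_W, d_{I_W})`: with `D i = ∂_{[i]}W` the divided
differences of `W`, the endomorphism `d_{I_W} = ∑_i (∂_{[i]}W • L_i + (x′_i − x_i) • C_i)`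
of the exterior algebra `⋀(k[x,x′]^n)` squares to `(W(x′) − W(x)) • id`.  Here `L_i`
is left multiplication by `ι(e_i)` and `C_i` is left contraction with `ε_i` (the odd
derivation with `C_i(1) = 0` and `C_i(ι(m)·ω) = ε_i(m)·ω − ι(m)·C_i(ω)`). -/
theorem unit_matrix_factorisation
    {k : Type*} [Field k] [CharZero k] {n : ℕ} (hn : 1 ≤ n)
    (W : MvPolynomial (Fin n) k)
    (D : Fin n → MvPolynomial (Fin n ⊕ Fin n) k)
    (hD : ∀ i : Fin n,
      (X (Sum.inr i) - X (Sum.inl i)) * D i = Wi W i.val - Wi W (i.val + 1))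
    (C : Fin n → Module.End (MvPolynomial (Fin n ⊕ Fin n) k)
      (ExteriorAlgebra (MvPolynomial (Fin n ⊕ Fin n) k)
        (Fin n → MvPolynomial (Fin n ⊕ Fin n) k)))
    (hC1 : ∀ i : Fin n, C i 1 = 0)
    (hC2 : ∀ (i : Fin n) (m : Fin n → MvPolynomial (Fin n ⊕ Fin n) k)
      (ω : ExteriorAlgebra (MvPolynomial (Fin n ⊕ Fin n) k)
        (Fin n → MvPolynomial (Fin n ⊕ Fin n) k)),
      C i ((ExteriorAlgebra.ι (MvPolynomial (Fin n ⊕ Fin n) k) m) * ω)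
        = m i • ω - (ExteriorAlgebra.ι (MvPolynomial (Fin n ⊕ Fin n) k) m) * C i ω) :
    (∑ i : Fin n,
        (D i • LinearMap.mulLeft (MvPolynomial (Fin n ⊕ Fin n) k)
            (ExteriorAlgebra.ι (MvPolynomial (Fin n ⊕ Fin n) k)
              (Pi.single i (1 : MvPolynomial (Fin n ⊕ Fin n) k)))
          + ((X (Sum.inr i) - X (Sum.inl i) : MvPolynomial (Fin n ⊕ Fin n) k)) • C i))
      ∘ₗ (∑ i : Fin n,
        (D i • LinearMap.mulLeft (MvPolynomial (Fin n ⊕ Fin n) k)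
            (ExteriorAlgebra.ι (MvPolynomial (Fin n ⊕ Fin n) k)
              (Pi.single i (1 : MvPolynomial (Fin n ⊕ Fin n) k)))
          + ((X (Sum.inr i) - X (Sum.inl i) : MvPolynomial (Fin n ⊕ Fin n) k)) • C i))
      = (rename Sum.inr W - rename Sum.inl W) •
          (LinearMap.id : Module.End (MvPolynomial (Fin n ⊕ Fin n) k)
            (ExteriorAlgebra (MvPolynomial (Fin n ⊕ Fin n) k)
              (Fin n → MvPolynomial (Fin n ⊕ Fin n) k))) := by
  have key := aux_mf D (fun i => (X (Sum.inr i) - X (Sum.inl i) : MvPolynomial (Fin n ⊕ Fin n) k))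
    C hC1 hC2
  rw [key]
  have htel : ∑ i : Fin n,
      (X (Sum.inr i) - X (Sum.inl i) : MvPolynomial (Fin n ⊕ Fin n) k) * D i
      = rename Sum.inr W - rename Sum.inl W := by
    have h1 : ∑ i : Fin n,
        (X (Sum.inr i) - X (Sum.inl i) : MvPolynomial (Fin n ⊕ Fin n) k) * D i
        = ∑ i : Fin n, (Wi W i.val - Wi W (i.val + 1)) :=
      Finset.sum_congr rfl fun i _ => hD i
    rw [h1, Fin.sum_univ_eq_sum_range (fun j => Wi W j - Wi W (j + 1)) n,
      Finset.sum_range_sub' (Wi W) n]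
    have e0 : Wi W 0 = rename Sum.inr W := by
      have hf : (fun j : Fin n => if (j : ℕ) < 0
            then (X (Sum.inl j) : MvPolynomial (Fin n ⊕ Fin n) k) else X (Sum.inr j))
          = fun j => X (Sum.inr j) := by
        funext j; simp
      rw [Wi, hf,
        show (rename Sum.inr : MvPolynomial (Fin n) k →ₐ[k] MvPolynomial (Fin n ⊕ Fin n) k)
          = aeval (X ∘ Sum.inr) from rename_eq_aeval _]
      rfl
    have en : Wi W n = rename Sum.inl W := by
      have hf : (fun j : Fin n => if (j : ℕ) < n
            then (X (Sum.inl j) : MvPolynomial (Fin n ⊕ Fin n) k) else X (Sum.inr j))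
          = fun j => X (Sum.inl j) := by
        funext j; simp [j.isLt]
      rw [Wi, hf,
        show (rename Sum.inl : MvPolynomial (Fin n) k →ₐ[k] MvPolynomial (Fin n ⊕ Fin n) k)
          = aeval (X ∘ Sum.inl) from rename_eq_aeval _]
      rfl
    rw [e0, en]
  rw [htel]
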